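/- Let S be a commutative semiring and let Id(S) denote the semiring of ideals of S (with ideal addition and ideal multiplication). Then: (1) if Id(S) is completely primary (every ideal, as an element of the semiring Id(S), is either a unit or nilpotent), then S is completely primary; and (2) if S is completely primary and S is a principal ideal semiring (every ideal of S is principal), then Id(S) is completely primary. -/

import Mathlib

lemma aux_unit_ideal {S : Type*} [CommSemiring S] {I : Ideal S} (h : IsUnit I) :
    I = ⊤ := by
  obtain ⟨u, hu⟩ := h
  have h1 : (u : Ideal S) * (↑u⁻¹ : Ideal S) = 1 := by
    rw [← Units.val_mul, mul_inv_cancel]; rfl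
  have : (1 : Ideal S) ≤ (u : Ideal S) := by
    rw [← h1]; exact Ideal.mul_le_inf.trans inf_le_left
  rw [hu] at this
  rw [Ideal.one_eq_top] at this
  exact top_le_iff.mp this

/-- For a commutative semiring `S` and its semiring of ideals `Id(S)`:
(1) if `Id(S)` is completely primary then so is `S`; and
(2) if `S` is completely primary and a principal ideal semiring, then `Id(S)` is
completely primary. -/
theorem stmt_19 {S : Type*} [CommSemiring S] :
    ((∀ I : Ideal S, IsUnit I ∨ ∃ n : ℕ, 0 < n ∧ I ^ n = (0 : Ideal S)) →
      ∀ s : S, IsUnit s ∨ ∃ n : ℕ, 0 < n ∧ s ^ n = 0) ∧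
    ((∀ s : S, IsUnit s ∨ ∃ n : ℕ, 0 < n ∧ s ^ n = 0) →
      (∀ I : Ideal S, Submodule.IsPrincipal I) →
      ∀ I : Ideal S, IsUnit I ∨ ∃ n : ℕ, 0 < n ∧ I ^ n = (0 : Ideal S)) := by
  constructor
  · intro h s
    rcases h (Ideal.span {s}) with hu | ⟨n, hn, hpow⟩
    · left
      have := aux_unit_ideal hu
      rwa [Ideal.span_singleton_eq_top] at this
    · right
      refine ⟨n, hn, ?_⟩
      have : Ideal.span {s ^ n} = (0 : Ideal S) := by
        rw [← Ideal.span_singleton_pow]; exact hpow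
      simpa [Ideal.span_singleton_eq_bot] using this
  · intro h hp I
    obtain ⟨s, rfl⟩ := hp I
    rcases h s with hu | ⟨n, hn, hpow⟩
    · left
      have : Ideal.span {s} = (⊤ : Ideal S) := Ideal.span_singleton_eq_top.mpr hu
      rw [show (Ideal.span {s} : Ideal S) = Submodule.span S {s} from rfl] at *
      rw [this]
      exact IsUnit.of_mul_eq_one (a := ⊤) ⊤ (by rw [Ideal.mul_top, Ideal.one_eq_top])
    · right
      refine ⟨n, hn, ?_⟩
      show Ideal.span {s} ^ n = 0
      rw [Ideal.span_singleton_pow, hpow]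
      simp [Ideal.span_singleton_eq_bot]
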